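/- Fix natural numbers N, m and Δ ≤ m, and a real p ∈ [0,1]. Under the probability measure on matrices H ∈ (ZMod 2)^{N×m} in which each entry is independently equal to 1 with probability p and 0 with probability 1−p, the probability that there exists a nonzero vector e ∈ (ZMod 2)^m with Hamming weight wt(e) ≤ Δ and H·e = 0 is at most ∑_{w=1}^{Δ} C(m,w) · ((1 + (1−2p)^w)/2)^N. -/

import Mathlib

open scoped Classical

/-- The Hamming weight of a vector over `ZMod 2`: the number of coordinates equal to `1`. -/
def hwt {m : ℕ} (v : Fin m → ZMod 2) : ℕ :=
  (Finset.univ.filter fun i => v i = 1).card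

noncomputable def Wb (p : ℝ) (x : ZMod 2) : ℝ := if x = 1 then p else 1 - p
noncomputable def chi (x : ZMod 2) : ℝ := if x = 0 then 1 else -1

lemma zmod2_cases (a : ZMod 2) : a = 0 ∨ a = 1 := by revert a; decide

lemma chi_add (a b : ZMod 2) : chi (a + b) = chi a * chi b := by
  rcases zmod2_cases a with ha | ha <;> rcases zmod2_cases b with hb | hb <;>
      subst ha <;> subst hb <;> simp [chi]
  rw [show ((1:ZMod 2) + 1) = 0 from by decide]
  norm_num [chi]

lemma chi_sum {ι : Type*} (s : Finset ι) (f : ι → ZMod 2) :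
    chi (∑ j ∈ s, f j) = ∏ j ∈ s, chi (f j) := by
  induction s using Finset.cons_induction with
  | empty => simp [chi]
  | cons a s ha ih => rw [Finset.sum_cons, Finset.prod_cons, chi_add, ih]

lemma sum_zmod2 (f : ZMod 2 → ℝ) : ∑ x, f x = f 0 + f 1 := by
  rw [show (Finset.univ : Finset (ZMod 2)) = {0, 1} from by decide]
  rw [Finset.sum_pair (by decide)]

lemma ite_eq_chi (x : ZMod 2) : (if x = 0 then (1:ℝ) else 0) = (1 + chi x) / 2 := by
  rcases zmod2_cases x with h | h <;> subst h <;> norm_num [chi]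

lemma row_char {m : ℕ} (p : ℝ) (S : Finset (Fin m)) :
    ∑ h : Fin m → ZMod 2, (∏ j, Wb p (h j)) * chi (∑ j ∈ S, h j)
      = (1 - 2 * p) ^ S.card := by
  have key : ∀ h : Fin m → ZMod 2,
      (∏ j, Wb p (h j)) * chi (∑ j ∈ S, h j)
        = ∏ j, (Wb p (h j) * if j ∈ S then chi (h j) else 1) := by
    intro h
    rw [chi_sum, Finset.prod_mul_distrib]
    congr 1
    rw [← Finset.prod_filter]
    congr 1
    simp [Finset.filter_mem_eq_inter]
  simp_rw [key]
  rw [← Fintype.prod_sum (f := fun (j : Fin m) (x : ZMod 2) => Wb p x * if j ∈ S then chi x else 1)]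
  have step : ∀ j : Fin m, (∑ x : ZMod 2, Wb p x * if j ∈ S then chi x else 1)
      = if j ∈ S then 1 - 2 * p else 1 := by
    intro j
    rw [sum_zmod2]
    by_cases hj : j ∈ S <;> simp [hj, Wb, chi] <;> ring
  simp_rw [step]
  rw [← Finset.prod_filter, Finset.filter_mem_eq_inter, Finset.univ_inter, Finset.prod_const]

lemma sum_Wb {m : ℕ} (p : ℝ) : ∑ h : Fin m → ZMod 2, ∏ j, Wb p (h j) = 1 := by
  rw [← Fintype.prod_sum (f := fun (_ : Fin m) (x : ZMod 2) => Wb p x)]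
  have : (∑ x : ZMod 2, Wb p x) = 1 := by rw [sum_zmod2]; simp [Wb]
  simp [this]

lemma row_prob {m : ℕ} (p : ℝ) (S : Finset (Fin m)) :
    ∑ h : Fin m → ZMod 2, (∏ j, Wb p (h j)) * (if (∑ j ∈ S, h j) = 0 then 1 else 0)
      = (1 + (1 - 2 * p) ^ S.card) / 2 := by
  have key : ∀ h : Fin m → ZMod 2,
      (∏ j, Wb p (h j)) * (if (∑ j ∈ S, h j) = 0 then (1:ℝ) else 0)
        = ((∏ j, Wb p (h j)) + (∏ j, Wb p (h j)) * chi (∑ j ∈ S, h j)) / 2 := by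
    intro h; rw [ite_eq_chi]; ring
  simp_rw [key]
  rw [← Finset.sum_div, Finset.sum_add_distrib, sum_Wb, row_char]

lemma matrix_prob {N m : ℕ} (p : ℝ) (S : Finset (Fin m)) :
    ∑ H : Fin N → Fin m → ZMod 2,
      (∏ i, ∏ j, Wb p (H i j)) * (if ∀ i, (∑ j ∈ S, H i j) = 0 then 1 else 0)
      = ((1 + (1 - 2 * p) ^ S.card) / 2) ^ N := by
  have key : ∀ H : Fin N → Fin m → ZMod 2,
      (∏ i, ∏ j, Wb p (H i j)) * (if ∀ i, (∑ j ∈ S, H i j) = 0 then (1:ℝ) else 0)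
      = ∏ i, ((∏ j, Wb p (H i j)) * (if (∑ j ∈ S, H i j) = 0 then 1 else 0)) := by
    intro H
    rw [Finset.prod_mul_distrib]
    congr 1
    rw [Finset.prod_boole]
    simp
  simp_rw [key]
  rw [← Fintype.prod_sum (f := fun (_ : Fin N) (h : Fin m → ZMod 2) =>
      (∏ j, Wb p (h j)) * (if (∑ j ∈ S, h j) = 0 then (1:ℝ) else 0))]
  simp_rw [row_prob]
  rw [Finset.prod_const, Finset.card_univ, Fintype.card_fin]

lemma dot_eq {m : ℕ} (h e : Fin m → ZMod 2) :
    ∑ j, h j * e j = ∑ j ∈ Finset.univ.filter (fun j => e j = 1), h j := by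
  rw [Finset.sum_filter]
  apply Finset.sum_congr rfl
  intro j _
  rcases zmod2_cases (e j) with h0 | h1
  · rw [h0]; simp [show (0 : ZMod 2) ≠ 1 from by decide]
  · rw [h1]; simp

lemma ne_zero_iff_hwt {m : ℕ} (e : Fin m → ZMod 2) : e ≠ 0 ↔ 1 ≤ hwt e := by
  rw [Nat.one_le_iff_ne_zero, not_iff_not.symm, not_not, not_not]
  unfold hwt
  rw [Finset.card_eq_zero, Finset.filter_eq_empty_iff]
  constructor
  · intro h j _; rw [h]; simp [show (0 : ZMod 2) ≠ 1 from by decide]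
  · intro h; funext j
    rcases zmod2_cases (e j) with h0 | h1
    · exact h0
    · exact absurd h1 (h (Finset.mem_univ j))

lemma card_hwt_eq {m : ℕ} (w : ℕ) :
    (Finset.univ.filter fun e : Fin m → ZMod 2 => hwt e = w).card = m.choose w := by
  rw [show m.choose w = ((Finset.univ : Finset (Fin m)).card).choose w by simp,
      ← Finset.card_powersetCard]
  apply Finset.card_nbij (fun e => Finset.univ.filter fun j => e j = 1)
  · intro e he
    simp only [Finset.mem_coe, Finset.mem_filter, Finset.mem_univ, true_and] at he
    rw [Finset.mem_coe, Finset.mem_powersetCard]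
    exact ⟨Finset.filter_subset _ _, he⟩
  · intro e _ e' _ hee'
    funext j
    have : (j ∈ Finset.univ.filter fun j => e j = 1) ↔
        (j ∈ Finset.univ.filter fun j => e' j = 1) := by
      simp only at hee'
      rw [hee']
    simp only [Finset.mem_filter, Finset.mem_univ, true_and] at this
    rcases zmod2_cases (e j) with h0 | h1
    · rcases zmod2_cases (e' j) with h0' | h1'
      · rw [h0, h0']
      · exact absurd (this.mpr h1') (by rw [h0]; decide)
    · rw [h1, this.mp h1]
  · intro S hS
    rw [Finset.mem_coe, Finset.mem_powersetCard] at hS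
    refine ⟨fun j => if j ∈ S then 1 else 0, ?_, ?_⟩
    · simp only [Finset.coe_filter, Set.mem_setOf_eq, Finset.mem_univ, true_and]
      unfold hwt
      rw [← hS.2]
      congr 1
      ext j
      simp only [Finset.mem_filter, Finset.mem_univ, true_and]
      by_cases hj : j ∈ S <;> simp [hj, show (0 : ZMod 2) ≠ 1 from by decide]
    · ext j
      simp only [Finset.mem_filter, Finset.mem_univ, true_and]
      by_cases hj : j ∈ S <;> simp [hj, show (0 : ZMod 2) ≠ 1 from by decide]

/-- **Union bound for low-weight codewords of a Bernoulli random code.**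
For `Δ ≤ m` and `p ∈ [0,1]`, under the product Bernoulli(p) measure on matrices
`H ∈ (ZMod 2)^{N×m}`, the probability that there exists a nonzero `e ∈ (ZMod 2)^m`
with `wt(e) ≤ Δ` and `H·e = 0` is at most
`∑_{w=1}^{Δ} C(m,w) · ((1 + (1-2p)^w)/2)^N`. -/
theorem bernoulli_code_distance (N m Δ : ℕ) (hΔ : Δ ≤ m) (p : ℝ)
    (hp : p ∈ Set.Icc (0 : ℝ) 1) :
    ∑ H ∈ Finset.univ.filter (fun H : Matrix (Fin N) (Fin m) (ZMod 2) =>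
        ∃ e : Fin m → ZMod 2, e ≠ 0 ∧ hwt e ≤ Δ ∧ H.mulVec e = 0),
        ∏ i : Fin N, ∏ j : Fin m, (if H i j = 1 then p else 1 - p)
      ≤ ∑ w ∈ Finset.Icc 1 Δ, (m.choose w : ℝ) * ((1 + (1 - 2 * p) ^ w) / 2) ^ N := by
  obtain ⟨hp0, hp1⟩ := hp
  set T : Finset (Fin m → ZMod 2) :=
    Finset.univ.filter (fun e => e ≠ 0 ∧ hwt e ≤ Δ) with hT
  have μnn : ∀ H : Matrix (Fin N) (Fin m) (ZMod 2),
      0 ≤ ∏ i : Fin N, ∏ j : Fin m, (if H i j = 1 then p else 1 - p) := by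
    intro H
    apply Finset.prod_nonneg; intro i _
    apply Finset.prod_nonneg; intro j _
    split <;> linarith
  have per_e : ∀ e : Fin m → ZMod 2,
      (∑ H : Matrix (Fin N) (Fin m) (ZMod 2),
        (if H.mulVec e = 0 then
          ∏ i : Fin N, ∏ j : Fin m, (if H i j = 1 then p else 1 - p) else 0))
      = ((1 + (1 - 2 * p) ^ hwt e) / 2) ^ N := by
    intro e
    have hmv : ∀ H : Matrix (Fin N) (Fin m) (ZMod 2),
        H.mulVec e = 0 ↔
          ∀ i, (∑ j ∈ Finset.univ.filter (fun j => e j = 1), H i j) = 0 := by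
      intro H
      rw [funext_iff]
      apply forall_congr'
      intro i
      rw [show H.mulVec e i = ∑ j, H i j * e j from rfl, dot_eq]
      simp
    have key : ∀ H : Fin N → Fin m → ZMod 2,
        (if Matrix.mulVec H e = 0 then
          ∏ i : Fin N, ∏ j : Fin m, (if H i j = 1 then p else 1 - p) else 0)
        = (∏ i, ∏ j, Wb p (H i j)) *
          (if ∀ i, (∑ j ∈ Finset.univ.filter (fun j => e j = 1), H i j) = 0
            then 1 else 0) := by
      intro H
      rw [mul_boole, if_congr (hmv H) rfl rfl]
      rfl
    calc (∑ H : Matrix (Fin N) (Fin m) (ZMod 2),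
          (if H.mulVec e = 0 then
            ∏ i : Fin N, ∏ j : Fin m, (if H i j = 1 then p else 1 - p) else 0))
        = ∑ H : Fin N → Fin m → ZMod 2,
          (if Matrix.mulVec H e = 0 then
            ∏ i : Fin N, ∏ j : Fin m, (if H i j = 1 then p else 1 - p) else 0) :=
          Fintype.sum_equiv (Equiv.refl _) _ _ (fun _ => rfl)
      _ = ∑ H : Fin N → Fin m → ZMod 2,
          (∏ i, ∏ j, Wb p (H i j)) *
          (if ∀ i, (∑ j ∈ Finset.univ.filter (fun j => e j = 1), H i j) = 0
            then 1 else 0) := Finset.sum_congr rfl (fun H _ => key H)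
      _ = ((1 + (1 - 2 * p) ^ hwt e) / 2) ^ N := matrix_prob p _
  calc ∑ H ∈ Finset.univ.filter (fun H : Matrix (Fin N) (Fin m) (ZMod 2) =>
          ∃ e : Fin m → ZMod 2, e ≠ 0 ∧ hwt e ≤ Δ ∧ H.mulVec e = 0),
          ∏ i : Fin N, ∏ j : Fin m, (if H i j = 1 then p else 1 - p)
      ≤ ∑ H ∈ Finset.univ.filter (fun H : Matrix (Fin N) (Fin m) (ZMod 2) =>
          ∃ e : Fin m → ZMod 2, e ≠ 0 ∧ hwt e ≤ Δ ∧ H.mulVec e = 0),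
          ∑ e ∈ T, (if H.mulVec e = 0 then
            ∏ i : Fin N, ∏ j : Fin m, (if H i j = 1 then p else 1 - p) else 0) := by
        apply Finset.sum_le_sum
        intro H hH
        rw [Finset.mem_filter] at hH
        obtain ⟨-, e, he0, hew, heH⟩ := hH
        have heT : e ∈ T := by
          rw [hT, Finset.mem_filter]
          exact ⟨Finset.mem_univ e, he0, hew⟩
        have h1 : (∏ i : Fin N, ∏ j : Fin m, (if H i j = 1 then p else 1 - p))
            = (if H.mulVec e = 0 then
              ∏ i : Fin N, ∏ j : Fin m, (if H i j = 1 then p else 1 - p) else 0) :=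
          (if_pos heH).symm
        refine le_trans (le_of_eq h1) (Finset.single_le_sum
          (f := fun e' => if H.mulVec e' = 0 then
            ∏ i : Fin N, ∏ j : Fin m, (if H i j = 1 then p else 1 - p) else 0)
          (fun e' _ => ?_) heT)
        by_cases h : H.mulVec e' = 0
        · rw [if_pos h]; exact μnn H
        · rw [if_neg h]
    _ ≤ ∑ H : Matrix (Fin N) (Fin m) (ZMod 2),
          ∑ e ∈ T, (if H.mulVec e = 0 then
            ∏ i : Fin N, ∏ j : Fin m, (if H i j = 1 then p else 1 - p) else 0) := by
        apply Finset.sum_le_sum_of_subset_of_nonneg (Finset.filter_subset _ _)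
        intro H _ _
        refine Finset.sum_nonneg fun e _ => ?_
        by_cases h : H.mulVec e = 0
        · rw [if_pos h]; exact μnn H
        · rw [if_neg h]
    _ = ∑ e ∈ T, ∑ H : Matrix (Fin N) (Fin m) (ZMod 2),
          (if H.mulVec e = 0 then
            ∏ i : Fin N, ∏ j : Fin m, (if H i j = 1 then p else 1 - p) else 0) :=
        Finset.sum_comm
    _ = ∑ e ∈ T, ((1 + (1 - 2 * p) ^ hwt e) / 2) ^ N :=
        Finset.sum_congr rfl (fun e _ => per_e e)
    _ = ∑ w ∈ Finset.Icc 1 Δ, ∑ e ∈ T.filter (fun e => hwt e = w),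
          ((1 + (1 - 2 * p) ^ hwt e) / 2) ^ N := by
        rw [Finset.sum_fiberwise_of_maps_to]
        intro e he
        rw [hT, Finset.mem_filter] at he
        rw [Finset.mem_Icc]
        exact ⟨(ne_zero_iff_hwt e).mp he.2.1, he.2.2⟩
    _ = ∑ w ∈ Finset.Icc 1 Δ, (m.choose w : ℝ) * ((1 + (1 - 2 * p) ^ w) / 2) ^ N := by
        apply Finset.sum_congr rfl
        intro w hw
        rw [Finset.mem_Icc] at hw
        have hTf : T.filter (fun e => hwt e = w)
            = Finset.univ.filter (fun e : Fin m → ZMod 2 => hwt e = w) := by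
          ext e
          rw [hT, Finset.filter_filter]
          simp only [Finset.mem_filter, Finset.mem_univ, true_and]
          constructor
          · exact fun h => h.2
          · intro h
            refine ⟨⟨?_, ?_⟩, h⟩
            · rw [ne_zero_iff_hwt, h]; exact hw.1
            · rw [h]; exact hw.2
        rw [hTf,
          Finset.sum_congr rfl (fun e he => by rw [(Finset.mem_filter.mp he).2]),
          Finset.sum_const, card_hwt_eq, nsmul_eq_mul]
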